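/- There is a bijection between the set of properly-marked {L,R}-words of length n-1 and the set of subgraphs of the path graph P_n whose vertex set contains the vertex n; under this bijection the number of marked L-elements equals the number of edges of the subgraph, and the number of unmarked L-elements equals the number of connected components minus one. -/

import Mathlib

/-- The alphabet {Lᵘ, Lᵐ, R} for properly-marked {L,R}-words. -/
inductive PMLetter
  | Lu : PMLetter
  | Lm : PMLetter
  | R : PMLetter
deriving DecidableEq

/-- A word is properly marked if no occurrence of Lᵐ is immediately followed by R. -/
def ProperlyMarked (w : List PMLetter) : Prop :=
  w.Chain' (fun a b => a = PMLetter.Lm → b ≠ PMLetter.R)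

namespace PMAux
open PMLetter SimpleGraph

/-- letter at position `i`, defaulting to `R` out of range. -/
def la (w : List PMLetter) (i : ℕ) : PMLetter := w.getD i PMLetter.R

lemma la_of_len_le {w : List PMLetter} {i : ℕ} (h : w.length ≤ i) : la w i = R :=
  List.getD_eq_default _ _ h

lemma lt_len_of_ne_R {w : List PMLetter} {i : ℕ} (h : la w i ≠ R) : i < w.length := by
  by_contra hc
  exact h (la_of_len_le (by omega))

lemma la_eq_get {w : List PMLetter} {i : ℕ} (h : i < w.length) :
    la w i = w.get ⟨i, h⟩ := by
  simp [la, List.getD, List.getElem?_eq_getElem h, List.get_eq_getElem]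

lemma pm_spec {w : List PMLetter} (hpm : ProperlyMarked w) {i : ℕ}
    (h1 : la w i = Lm) (h2 : i + 1 < w.length) : la w (i + 1) ≠ R := by
  have := List.isChain_iff_getElem.mp hpm i (by omega)
  rw [la_eq_get h2]
  rw [la_eq_get (by omega)] at h1
  exact this h1


variable {n : ℕ}

/-- The subgraph of the path graph associated to a properly marked word. -/
def toSubgraph (n : ℕ) (w : List PMLetter) (hlen : w.length = n - 1)
    (hpm : ProperlyMarked w) : (pathGraph n).Subgraph where
  verts := {v | v.val = n - 1 ∨ la w v.val ≠ R}
  Adj u v := (u.val + 1 = v.val ∧ la w u.val = Lm) ∨ (v.val + 1 = u.val ∧ la w v.val = Lm)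
  adj_sub h := pathGraph_adj.mpr (h.imp And.left And.left)
  edge_vert := by
    rintro u v (⟨h1, h2⟩ | ⟨h1, h2⟩)
    · exact Or.inr (by simp [h2])
    · rcases eq_or_lt_of_le (Nat.lt_iff_add_one_le.mp u.isLt) with h | h
      · exact Or.inl (by omega)
      · refine Or.inr ?_
        rw [← h1]
        exact pm_spec hpm h2 (by omega)
  symm := ⟨fun u v h => Or.symm h⟩

open Classical in
/-- The properly marked word associated to a subgraph of the path graph. -/
noncomputable def toWord (n : ℕ) (H : (pathGraph n).Subgraph) : List PMLetter :=
  List.ofFn (fun i : Fin (n - 1) =>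
    if H.Adj ⟨i.val, by have := i.isLt; omega⟩ ⟨i.val + 1, by have := i.isLt; omega⟩ then Lm
    else if (⟨i.val, by have := i.isLt; omega⟩ : Fin n) ∈ H.verts then Lu else R)

@[simp] lemma toWord_length (H : (pathGraph n).Subgraph) : (toWord n H).length = n - 1 :=
  List.length_ofFn

open Classical in
lemma la_toWord (H : (pathGraph n).Subgraph) {i : ℕ} (hi : i + 1 < n) :
    la (toWord n H) i =
      (if H.Adj ⟨i, by omega⟩ ⟨i + 1, hi⟩ then Lm
       else if (⟨i, by omega⟩ : Fin n) ∈ H.verts then Lu else R) := by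
  have hlt : i < (toWord n H).length := by simp; omega
  rw [la_eq_get hlt]
  simp only [toWord, List.get_eq_getElem, List.getElem_ofFn]

lemma la_toWord_Lm (H : (pathGraph n).Subgraph) {i : ℕ} :
    la (toWord n H) i = Lm ↔
      ∃ hi : i + 1 < n, H.Adj ⟨i, by omega⟩ ⟨i + 1, hi⟩ := by
  constructor
  · intro h
    have hi : i < n - 1 := by
      have := lt_len_of_ne_R (w := toWord n H) (i := i) (by rw [h]; simp)
      simpa using this
    have hi' : i + 1 < n := by omega
    refine ⟨hi', ?_⟩
    rw [la_toWord H hi'] at h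
    by_contra hc
    rw [if_neg hc] at h
    split at h <;> simp_all
  · rintro ⟨hi, hadj⟩
    rw [la_toWord H hi, if_pos hadj]

lemma la_toWord_ne_R (H : (pathGraph n).Subgraph) {i : ℕ} (hi : i + 1 < n) :
    la (toWord n H) i ≠ R ↔ (⟨i, by omega⟩ : Fin n) ∈ H.verts := by
  rw [la_toWord H hi]
  constructor
  · intro hR
    by_contra hc
    rw [if_neg (fun hadj => hc (H.edge_vert hadj)), if_neg hc] at hR
    exact hR rfl
  · intro h
    split <;> simp [h]

lemma toWord_pm (H : (pathGraph n).Subgraph) : ProperlyMarked (toWord n H) := by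
  rw [ProperlyMarked]; apply List.isChain_iff_getElem.mpr
  intro i h
  rw [toWord_length] at h
  rw [show ∀ (j : ℕ) (hj : j < (toWord n H).length), (toWord n H)[j] = la (toWord n H) j from
    fun j hj => (la_eq_get hj).symm, show ∀ (j : ℕ) (hj : j < (toWord n H).length),
    (toWord n H)[j] = la (toWord n H) j from fun j hj => (la_eq_get hj).symm]
  intro h1
  obtain ⟨hi, hadj⟩ := (la_toWord_Lm H).mp h1
  have hmem : (⟨i + 1, hi⟩ : Fin n) ∈ H.verts := H.edge_vert (H.adj_symm hadj)
  have hi2 : i + 1 + 1 < n := by omega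
  rw [la_toWord H hi2]
  split <;> simp [hmem]
  all_goals (simp; omega)


lemma toWord_toSubgraph (hn : 1 ≤ n) (w : List PMLetter) (hlen : w.length = n - 1)
    (hpm : ProperlyMarked w) : toWord n (toSubgraph n w hlen hpm) = w := by
  apply List.ext_get (by simp [hlen])
  intro i h1 h2
  rw [toWord_length] at h1
  rw [← la_eq_get, ← la_eq_get]
  have hi : i + 1 < n := by omega
  rw [la_toWord _ hi]
  have hadj : (toSubgraph n w hlen hpm).Adj ⟨i, by omega⟩ ⟨i + 1, hi⟩ ↔ la w i = Lm := by
    constructor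
    · rintro (⟨_, h⟩ | ⟨h, _⟩)
      · exact h
      · simp at h; omega
    · intro h; exact Or.inl ⟨rfl, h⟩
  have hmem : (⟨i, by omega⟩ : Fin n) ∈ (toSubgraph n w hlen hpm).verts ↔ la w i ≠ R := by
    constructor
    · rintro (h | h)
      · simp at h; omega
      · exact h
    · exact Or.inr
  rw [la_eq_get (by omega : i < w.length)] at hadj hmem
  rcases hget : w.get ⟨i, by omega⟩ with _ | _ | _
  · rw [if_neg (by rw [hadj, hget]; simp), if_pos (by rw [hmem, hget]; simp),
      la_eq_get h2, hget]
  · rw [if_pos (by rw [hadj, hget]), la_eq_get h2, hget]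
  · rw [if_neg (by rw [hadj, hget]; simp), if_neg (by rw [hmem, hget]; simp),
      la_eq_get h2, hget]

lemma toSubgraph_toWord (hn : 1 ≤ n) (H : (pathGraph n).Subgraph)
    (hmem : (⟨n - 1, Nat.sub_lt hn Nat.one_pos⟩ : Fin n) ∈ H.verts) :
    toSubgraph n (toWord n H) (toWord_length H) (toWord_pm H) = H := by
  apply SimpleGraph.Subgraph.ext
  · ext v
    show v.val = n - 1 ∨ la (toWord n H) v.val ≠ R ↔ v ∈ H.verts
    rcases eq_or_lt_of_le (Nat.lt_iff_add_one_le.mp v.isLt) with h | h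
    · have hv : v = ⟨n - 1, by omega⟩ := Fin.ext (by show v.val = n - 1; omega)
      rw [hv]
      exact ⟨fun _ => hmem, fun _ => Or.inl rfl⟩
    · have hi : v.val + 1 < n := by omega
      rw [la_toWord_ne_R H hi]
      have hv : (⟨v.val, by omega⟩ : Fin n) = v := rfl
      rw [hv]
      constructor
      · rintro (h' | h')
        · omega
        · exact h'
      · exact Or.inr
  · ext u v
    show (u.val + 1 = v.val ∧ la (toWord n H) u.val = Lm) ∨
        (v.val + 1 = u.val ∧ la (toWord n H) v.val = Lm) ↔ H.Adj u v
    constructor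
    · rintro (⟨h1, h2⟩ | ⟨h1, h2⟩)
      · obtain ⟨hi, hadj⟩ := (la_toWord_Lm H).mp h2
        have : (⟨u.val, by omega⟩ : Fin n) = u := rfl
        rw [this] at hadj
        have : (⟨u.val + 1, hi⟩ : Fin n) = v := by apply Fin.ext; simpa using h1
        rwa [this] at hadj
      · obtain ⟨hi, hadj⟩ := (la_toWord_Lm H).mp h2
        have : (⟨v.val, by omega⟩ : Fin n) = v := rfl
        rw [this] at hadj
        have : (⟨v.val + 1, hi⟩ : Fin n) = u := by apply Fin.ext; simpa using h1
        rw [this] at hadj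
        exact H.adj_symm hadj
    · intro hadj
      rcases pathGraph_adj.mp (H.adj_sub hadj) with h | h
      · refine Or.inl ⟨h, (la_toWord_Lm H).mpr ⟨by omega, ?_⟩⟩
        have h1 : (⟨u.val, by omega⟩ : Fin n) = u := rfl
        have h2 : (⟨u.val + 1, by omega⟩ : Fin n) = v := by apply Fin.ext; simpa using h
        rw [h1, h2]; exact hadj
      · refine Or.inr ⟨h, (la_toWord_Lm H).mpr ⟨by omega, ?_⟩⟩
        have h1 : (⟨v.val, by omega⟩ : Fin n) = v := rfl
        have h2 : (⟨v.val + 1, by omega⟩ : Fin n) = u := by apply Fin.ext; simpa using h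
        rw [h1, h2]; exact H.adj_symm hadj



lemma countP_range (w : List PMLetter) (a : PMLetter) (ha : a ≠ R) :
    ∀ k, w.length ≤ k →
      (List.range k).countP (fun i => decide (la w i = a)) = w.count a := by
  induction w with
  | nil =>
    intro k _
    rw [List.count_nil, List.countP_eq_zero.mpr]
    intro i _
    simp [la, ha.symm]
  | cons h t ih =>
    intro k hk
    obtain ⟨k', rfl⟩ : ∃ k', k = k' + 1 := ⟨k - 1, by simp at hk; omega⟩
    rw [List.range_succ_eq_map, List.countP_cons, List.countP_map]
    have e1 : ((fun i => decide (la (h :: t) i = a)) ∘ (· + 1)) =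
        fun i => decide (la t i = a) := by
      funext i
      simp [la, List.getD_cons_succ]
    rw [e1, ih k' (by simp at hk; omega), List.count_cons]
    have e2 : la (h :: t) 0 = h := rfl
    rw [e2]
    by_cases hha : h = a
    · simp [hha]
    · simp [hha, Ne.symm hha]

lemma ncard_la_eq (hn : 1 ≤ n) (w : List PMLetter) (hlen : w.length = n - 1)
    (a : PMLetter) (ha : a ≠ R) :
    {v : Fin n | la w v.val = a}.ncard = w.count a := by
  classical
  rw [Set.ncard_eq_toFinset_card']
  rw [Set.toFinset_setOf]
  have h1 : (Finset.univ.filter fun v : Fin n => la w v.val = a).card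
      = ((Finset.range n).filter fun i => la w i = a).card :=
    Finset.card_bij (fun v _ => v.val)
      (fun v hv => by
        simp only [Finset.mem_filter, Finset.mem_univ, true_and] at hv
        simp only [Finset.mem_filter, Finset.mem_range]
        exact ⟨v.isLt, hv⟩)
      (fun v₁ h₁ v₂ h₂ h => Fin.ext h)
      (fun i hi => by
        simp only [Finset.mem_filter, Finset.mem_range, Finset.mem_univ] at hi
        exact ⟨⟨i, hi.1⟩, by simpa using hi.2, rfl⟩)
  rw [h1, ← countP_range w a ha n (by omega), Finset.card, Finset.filter_val,
    ← Multiset.countP_eq_card_filter, Finset.range_val]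
  exact Multiset.coe_countP _ _




/-- Map a vertex to the edge leading to its right neighbour. -/
def edgeOf (n : ℕ) (v : Fin n) : Sym2 (Fin n) :=
  if h : v.val + 1 < n then s(v, ⟨v.val + 1, h⟩) else s(v, v)

lemma edgeSet_eq (hn : 1 ≤ n) (w : List PMLetter) (hlen : w.length = n - 1)
    (hpm : ProperlyMarked w) :
    (toSubgraph n w hlen hpm).edgeSet = edgeOf n '' {v : Fin n | la w v.val = Lm} := by
  ext e
  induction e with
  | _ u v =>
    rw [SimpleGraph.Subgraph.mem_edgeSet]
    constructor
    · rintro (⟨h1, h2⟩ | ⟨h1, h2⟩)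
      · refine ⟨u, h2, ?_⟩
        rw [edgeOf, dif_pos (by omega)]
        have hv : (⟨u.val + 1, by omega⟩ : Fin n) = v := Fin.ext h1
        rw [hv]
      · refine ⟨v, h2, ?_⟩
        rw [edgeOf, dif_pos (by omega)]
        rw [Sym2.eq_swap]
        have hv : (⟨v.val + 1, by omega⟩ : Fin n) = u := Fin.ext h1
        rw [hv]
    · rintro ⟨x, hx, hxe⟩
      have hx1 : x.val + 1 < n := by
        have := lt_len_of_ne_R (w := w) (i := x.val) (by rw [hx]; simp)
        omega
      rw [edgeOf, dif_pos hx1] at hxe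
      rcases Sym2.eq_iff.mp hxe with ⟨h1, h2⟩ | ⟨h1, h2⟩
      · subst h1
        exact Or.inl ⟨by rw [← h2], hx⟩
      · subst h1
        exact Or.inr ⟨by rw [← h2], hx⟩

lemma edgeSet_ncard (hn : 1 ≤ n) (w : List PMLetter) (hlen : w.length = n - 1)
    (hpm : ProperlyMarked w) :
    (toSubgraph n w hlen hpm).edgeSet.ncard = w.count Lm := by
  rw [edgeSet_eq hn w hlen hpm]
  rw [Set.ncard_image_of_injOn]
  · exact ncard_la_eq hn w hlen Lm (by simp)
  · intro x hx y hy hxy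
    have hx1 : x.val + 1 < n := by
      have := lt_len_of_ne_R (w := w) (i := x.val) (by rw [hx]; simp)
      omega
    have hy1 : y.val + 1 < n := by
      have := lt_len_of_ne_R (w := w) (i := y.val) (by rw [hy]; simp)
      omega
    rw [edgeOf, edgeOf, dif_pos hx1, dif_pos hy1] at hxy
    rcases Sym2.eq_iff.mp hxy with ⟨h1, _⟩ | ⟨h1, h2⟩
    · exact h1
    · apply Fin.ext
      have e1 : x.val = y.val + 1 := by rw [h1]
      have e2 : x.val + 1 = y.val := by rw [← h2]
      omega



/-- Walk right along marked letters, with fuel. -/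
def reAux (w : List PMLetter) : ℕ → ℕ → ℕ
  | 0, i => i
  | k + 1, i => if la w i = Lm then reAux w k (i + 1) else i

/-- The right end of the run containing `i`. -/
def runEnd (w : List PMLetter) (n i : ℕ) : ℕ := reAux w (n - 1 - i) i

lemma reAux_not_Lm (w : List PMLetter) :
    ∀ (fuel i : ℕ), w.length ≤ i + fuel → la w (reAux w fuel i) ≠ Lm := by
  intro fuel
  induction fuel with
  | zero => intro i hi; rw [reAux, la_of_len_le (by omega)]; simp
  | succ k ih =>
    intro i hi
    rw [reAux]
    split
    · exact ih (i + 1) (by omega)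
    · assumption

lemma reAux_le (w : List PMLetter) :
    ∀ (fuel i m : ℕ), i + fuel ≤ m → reAux w fuel i ≤ m := by
  intro fuel
  induction fuel with
  | zero => intro i m hi; rw [reAux]; omega
  | succ k ih =>
    intro i m hi
    rw [reAux]
    split
    · exact ih (i + 1) m (by omega)
    · omega

lemma reAux_verts (w : List PMLetter) (hpm : ProperlyMarked w) {m : ℕ} (hm : w.length = m) :
    ∀ (fuel i : ℕ), i + fuel ≤ m → (i = m ∨ la w i ≠ R) →
      (reAux w fuel i = m ∨ la w (reAux w fuel i) ≠ R) := by
  intro fuel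
  induction fuel with
  | zero => intro i hi hin; rw [reAux]; exact hin
  | succ k ih =>
    intro i hi hin
    rw [reAux]
    split
    · rename_i hLm
      refine ih (i + 1) (by omega) ?_
      rcases eq_or_lt_of_le (show i + 1 ≤ m by
          have := lt_len_of_ne_R (w := w) (i := i) (by rw [hLm]; simp); omega) with h | h
      · exact Or.inl h
      · exact Or.inr (pm_spec hpm hLm (by omega))
    · exact hin

lemma runEnd_fixed (w : List PMLetter) (hlen : w.length = n - 1) {i : ℕ}
    (h : i = n - 1 ∨ la w i = Lu) : runEnd w n i = i := by
  rcases h with h | h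
  · rw [runEnd, h]
    simp [reAux]
  · have hi : i < n - 1 := by
      have := lt_len_of_ne_R (w := w) (i := i) (by rw [h]; simp)
      omega
    obtain ⟨k, hk⟩ : ∃ k, n - 1 - i = k + 1 := ⟨n - 1 - i - 1, by omega⟩
    rw [runEnd, hk, reAux, if_neg (by rw [h]; simp)]



lemma runEnd_step (w : List PMLetter) (hlen : w.length = n - 1) {i : ℕ}
    (h : la w i = Lm) : runEnd w n i = runEnd w n (i + 1) := by
  have hi : i < n - 1 := by
    have := lt_len_of_ne_R (w := w) (i := i) (by rw [h]; simp)
    omega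
  have hk : n - 1 - i = (n - 1 - (i + 1)) + 1 := by omega
  rw [runEnd, hk, reAux, if_pos h]
  rfl

section Components

variable (hn : 1 ≤ n) (w : List PMLetter) (hlen : w.length = n - 1)
  (hpm : ProperlyMarked w)

lemma runEnd_adj {u v : Fin n}
    (h : (toSubgraph n w hlen hpm).Adj u v) : runEnd w n u.val = runEnd w n v.val := by
  rcases h with ⟨h1, h2⟩ | ⟨h1, h2⟩
  · rw [runEnd_step w hlen h2, h1]
  · rw [runEnd_step w hlen h2, h1]

lemma runEnd_reach {a b : (toSubgraph n w hlen hpm).verts}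
    (h : (toSubgraph n w hlen hpm).coe.Reachable a b) :
    runEnd w n a.1.1 = runEnd w n b.1.1 := by
  obtain ⟨p⟩ := h
  induction p with
  | nil => rfl
  | cons hadj _ ih =>
    exact (runEnd_adj w hlen hpm (by rw [SimpleGraph.Subgraph.coe_adj] at hadj; exact hadj)).trans ih

lemma reach_runEnd : ∀ (fuel i : ℕ), i + fuel ≤ n - 1 →
    ∀ (a b : (toSubgraph n w hlen hpm).verts),
      a.1.1 = i → b.1.1 = reAux w fuel i →
      (toSubgraph n w hlen hpm).coe.Reachable a b := by
  intro fuel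
  induction fuel with
  | zero =>
    intro i hi a b ha hb
    have : a = b := Subtype.ext (Fin.ext (by rw [ha, hb]; rfl))
    rw [this]
  | succ k ih =>
    intro i hi a b ha hb
    rw [reAux] at hb
    by_cases hLm : la w i = Lm
    · rw [if_pos hLm] at hb
      have hbound : i + 1 < n := by omega
      have hmem : (⟨i + 1, hbound⟩ : Fin n) ∈ (toSubgraph n w hlen hpm).verts := by
        rcases eq_or_lt_of_le (show i + 1 ≤ n - 1 by omega) with h | h
        · exact Or.inl h
        · exact Or.inr (pm_spec hpm hLm (by omega))
      set a' : (toSubgraph n w hlen hpm).verts := ⟨⟨i + 1, hbound⟩, hmem⟩ with ha'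
      have hadj : (toSubgraph n w hlen hpm).coe.Adj a a' := by
        rw [SimpleGraph.Subgraph.coe_adj]
        exact Or.inl ⟨by rw [ha], by rw [ha]; exact hLm⟩
      exact hadj.reachable.trans (ih (i + 1) (by omega) a' b rfl hb)
    · rw [if_neg hLm] at hb
      have : a = b := Subtype.ext (Fin.ext (by rw [ha, hb]))
      rw [this]


lemma runEnd_lt (i : ℕ) (hi : i ≤ n - 1) : runEnd w n i ≤ n - 1 :=
  reAux_le w _ _ _ (by omega)

include hlen hpm in
lemma runEnd_prop (i : ℕ) (hi : i ≤ n - 1) (hin : i = n - 1 ∨ la w i ≠ R) :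
    runEnd w n i = n - 1 ∨ la w (runEnd w n i) = Lu := by
  have h1 : la w (runEnd w n i) ≠ Lm :=
    reAux_not_Lm w _ _ (by omega)
  have h2 := reAux_verts w hpm hlen (n - 1 - i) i (by omega) hin
  rcases h2 with h2 | h2
  · exact Or.inl h2
  · right
    rcases h : la w (runEnd w n i) with _ | _ | _
    · rfl
    · exact absurd h h1
    · exact absurd h h2

noncomputable def compEquiv :
    (toSubgraph n w hlen hpm).coe.ConnectedComponent ≃
      {v : Fin n // v.val = n - 1 ∨ la w v.val = Lu} where
  toFun := SimpleGraph.ConnectedComponent.lift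
    (fun a => ⟨⟨runEnd w n a.1.1, by
        have h1 := runEnd_lt (n := n) w a.1.1 (by have := a.1.isLt; omega)
        omega⟩,
      runEnd_prop w hlen hpm a.1.1 (by have := a.1.isLt; omega) a.2⟩)
    (fun a b p _ => Subtype.ext (Fin.ext (runEnd_reach w hlen hpm ⟨p⟩)))
  invFun := fun r => (toSubgraph n w hlen hpm).coe.connectedComponentMk
    ⟨r.1, r.2.imp id (fun h => by rw [h]; simp)⟩
  left_inv := by
    apply SimpleGraph.ConnectedComponent.ind
    intro a
    refine (SimpleGraph.ConnectedComponent.sound ?_).symm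
    exact reach_runEnd w hlen hpm (n - 1 - a.1.1) a.1.1 (by omega) a _ rfl rfl
  right_inv := fun r => Subtype.ext (Fin.ext (runEnd_fixed w hlen r.2))

include hn in
lemma card_components :
    Nat.card (toSubgraph n w hlen hpm).coe.ConnectedComponent = w.count Lu + 1 := by
  rw [Nat.card_congr (compEquiv hn w hlen hpm)]
  have hset : {v : Fin n // v.val = n - 1 ∨ la w v.val = Lu}
      = ↥({v : Fin n | v.val = n - 1 ∨ la w v.val = Lu} : Set (Fin n)) := rfl
  rw [hset, Nat.card_coe_set_eq]
  have hins : ({v : Fin n | v.val = n - 1 ∨ la w v.val = Lu} : Set (Fin n))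
      = insert ⟨n - 1, by omega⟩ {v : Fin n | la w v.val = Lu} := by
    ext v
    simp only [Set.mem_setOf_eq, Set.mem_insert_iff]
    constructor
    · rintro (h | h)
      · exact Or.inl (Fin.ext h)
      · exact Or.inr h
    · rintro (h | h)
      · exact Or.inl (by rw [h])
      · exact Or.inr h
  have hnotmem : (⟨n - 1, by omega⟩ : Fin n) ∉ {v : Fin n | la w v.val = Lu} := by
    intro hmem
    simp only [Set.mem_setOf_eq, Fin.val_mk] at hmem
    rw [la_of_len_le (by omega)] at hmem
    exact absurd hmem (by simp)
  rw [hins, Set.ncard_insert_of_notMem hnotmem, ncard_la_eq hn w hlen Lu (by simp)]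

end Components

end PMAux

theorem pm_words_equiv_path_subgraphs (n : ℕ) (hn : 1 ≤ n) :
    ∃ T : {w : List PMLetter // w.length = n - 1 ∧ ProperlyMarked w} ≃
        {H : (SimpleGraph.pathGraph n).Subgraph // (⟨n - 1, by omega⟩ : Fin n) ∈ H.verts},
      ∀ w, w.1.count PMLetter.Lm = (T w).1.edgeSet.ncard ∧
        w.1.count PMLetter.Lu = Nat.card (T w).1.coe.ConnectedComponent - 1 := by
  refine ⟨⟨fun w => ⟨PMAux.toSubgraph n w.1 w.2.1 w.2.2, Or.inl rfl⟩,
    fun H => ⟨PMAux.toWord n H.1, PMAux.toWord_length H.1, PMAux.toWord_pm H.1⟩,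
    fun w => Subtype.ext (PMAux.toWord_toSubgraph hn w.1 w.2.1 w.2.2),
    fun H => Subtype.ext (PMAux.toSubgraph_toWord hn H.1 H.2)⟩, ?_⟩
  intro w
  simp only [Equiv.coe_fn_mk]
  constructor
  · exact (PMAux.edgeSet_ncard hn w.1 w.2.1 w.2.2).symm
  · rw [PMAux.card_components hn w.1 w.2.1 w.2.2]
    omega
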